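/- The Xu–Yager relation ⪯_XY on closed bounded real intervals, defined by [a,b] ⪯_XY [c,d] iff a + b < c + d, or (a + b = c + d and b − a ≤ d − c), is an admissible order on the set of closed bounded real intervals: it is a linear (total) order and [a,b] ≤_KM [c,d] implies [a,b] ⪯_XY [c,d]. -/

import Mathlib

/-- The set `𝕀ℝ` of closed bounded real intervals, encoded as endpoint pairs. -/
def IntervalR : Type := {p : ℝ × ℝ // p.1 ≤ p.2}

/-- The Kulisch–Miranker order: `[a,b] ≤_KM [c,d]` iff `a ≤ c` and `b ≤ d`. -/
def leKM (I J : IntervalR) : Prop := I.1.1 ≤ J.1.1 ∧ I.1.2 ≤ J.1.2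

/-- The Xu–Yager order: `[a,b] ⪯_XY [c,d]` iff `a + b < c + d`, or
`a + b = c + d ∧ b − a ≤ d − c`. -/
def leXY (I J : IntervalR) : Prop :=
  I.1.1 + I.1.2 < J.1.1 + J.1.2 ∨
    (I.1.1 + I.1.2 = J.1.1 + J.1.2 ∧ I.1.2 - I.1.1 ≤ J.1.2 - J.1.1)

/-- `⪯_XY` is an admissible order on `𝕀ℝ`: a linear (total) order
refining the Kulisch–Miranker order. -/
theorem xuYager_admissible :
    (∀ I, leXY I I) ∧
    (∀ I J, leXY I J → leXY J I → I = J) ∧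
    (∀ I J K, leXY I J → leXY J K → leXY I K) ∧
    (∀ I J, leXY I J ∨ leXY J I) ∧
    (∀ I J, leKM I J → leXY I J) := by
  refine ⟨?_, ?_, ?_, ?_, ?_⟩
  · intro I; exact Or.inr ⟨rfl, le_refl _⟩
  · rintro ⟨⟨a, b⟩, hI⟩ ⟨⟨c, d⟩, hJ⟩ h1 h2
    simp only [leXY] at h1 h2
    have ha : a = c ∧ b = d := by
      rcases h1 with h1 | ⟨e1, l1⟩ <;> rcases h2 with h2 | ⟨e2, l2⟩ <;>
        constructor <;> nlinarith
    simp [ha.1, ha.2]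
    rfl
  · rintro I J K h1 h2
    rcases h1 with h1 | ⟨e1, l1⟩ <;> rcases h2 with h2 | ⟨e2, l2⟩
    · exact Or.inl (by linarith)
    · exact Or.inl (by linarith)
    · exact Or.inl (by linarith)
    · exact Or.inr ⟨by linarith, by linarith⟩
  · intro I J
    rcases lt_trichotomy (I.1.1 + I.1.2) (J.1.1 + J.1.2) with h | h | h
    · exact Or.inl (Or.inl h)
    · rcases le_total (I.1.2 - I.1.1) (J.1.2 - J.1.1) with h' | h'
      · exact Or.inl (Or.inr ⟨h, h'⟩)
      · exact Or.inr (Or.inr ⟨h.symm, h'⟩)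
    · exact Or.inr (Or.inl h)
  · rintro I J ⟨h1, h2⟩
    rcases eq_or_lt_of_le (add_le_add h1 h2) with h | h
    · exact Or.inr ⟨h, by nlinarith⟩
    · exact Or.inl h
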